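/- Let Ω ⊆ ℝⁿ be a nonempty closed convex set and let T : ℝⁿ ⇉ ℝⁿ be maximal monotone with dom T = Ω. Then sol(T,Ω) is nonempty and bounded if and only if for every w ∈ Ω^∞ \ {0} there exist x ∈ Ω and v ∈ T(x) with ⟨v, w⟩ > 0. (If Ω is bounded then Ω^∞ = {0} and the condition holds trivially.) -/
import Mathlib


open Set
open scoped InnerProductSpace

open Filter Topology

section Minty
variable {E : Type*} [NormedAddCommGroup E] [InnerProductSpace ℝ E]

/-- the affine functions indexed by the graph -/
private noncomputable def lB (y w : E) (z : E × E) : ℝ := ⟪w, z.1⟫_ℝ + ⟪z.2, y⟫_ℝ - ⟪w, y⟫_ℝ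

/-- the quadratic -/
private noncomputable def rB (z : E × E) : ℝ := ‖z.1‖^2/2 + ‖z.2‖^2/2

private lemma lB_cont (y w : E) : Continuous (fun zc : (E × E) × ℝ => lB y w zc.1 + rB zc.1 - zc.2) := by
  unfold lB rB
  apply Continuous.sub ?_ continuous_snd
  apply Continuous.add
  · apply Continuous.sub
    · exact Continuous.add (continuous_const.inner (continuous_fst.fst))
        ((continuous_fst.snd).inner continuous_const)
    · exact continuous_const
  · exact Continuous.add ((continuous_fst.fst.norm.pow 2).div_const 2)
      ((continuous_fst.snd.norm.pow 2).div_const 2)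

private lemma lB_id (y w : E) (z : E × E) :
    lB y w z + rB z = ‖z.1 + w‖^2/2 + ‖z.2 + y‖^2/2 - ‖w + y‖^2/2 := by
  have e1 := norm_add_sq_real z.1 w
  have e2 := norm_add_sq_real z.2 y
  have e3 := norm_add_sq_real w y
  have c1 : ⟪w, z.1⟫_ℝ = ⟪z.1, w⟫_ℝ := real_inner_comm _ _
  unfold lB rB
  linarith

private lemma minty_aux [FiniteDimensional ℝ E] (S : E → Set E)
    (hm : ∀ x y v w, v ∈ S x → w ∈ S y → 0 ≤ ⟪v - w, x - y⟫_ℝ)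
    (hmaxpt : ∀ x v, (∀ y w, w ∈ S y → 0 ≤ ⟪v - w, x - y⟫_ℝ) → v ∈ S x)
    (hne : ∃ y w, w ∈ S y) : ∃ x, -x ∈ S x := by
  classical
  obtain ⟨y₀, w₀, hw₀⟩ := hne
  -- monotonicity in the lB form
  have hmono_le : ∀ y w, w ∈ S y → ∀ y' w', w' ∈ S y' → lB y w (y', w') ≤ ⟪y', w'⟫_ℝ := by
    intro y w hw y' w' hw'
    have h := hm y' y w' w hw' hw
    rw [inner_sub_left, inner_sub_right, inner_sub_right] at h
    have c1 : ⟪y', w'⟫_ℝ = ⟪w', y'⟫_ℝ := real_inner_comm _ _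
    unfold lB
    simp only
    linarith
  set A : Set ((E × E) × ℝ) := {zc | ∀ y w, w ∈ S y → lB y w zc.1 + rB zc.1 ≤ zc.2} with hAdef
  obtain ⟨c₀, hc₀⟩ : ∃ c : ℝ, c = ⟪y₀, w₀⟫_ℝ + rB (y₀, w₀) := ⟨_, rfl⟩
  have hz₀A : ((y₀, w₀), c₀) ∈ A := by
    intro y w hw
    have := hmono_le y w hw y₀ w₀ hw₀
    show lB y w (y₀, w₀) + rB (y₀, w₀) ≤ c₀
    rw [hc₀]
    linarith
  have hAclosed : IsClosed A := by
    have : A = ⋂ (p : {p : E × E // p.2 ∈ S p.1}),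
        {zc : (E × E) × ℝ | lB p.1.1 p.1.2 zc.1 + rB zc.1 - zc.2 ≤ 0} := by
      ext zc
      simp only [hAdef, mem_setOf_eq, mem_iInter, Subtype.forall, Prod.forall, sub_nonpos]
    rw [this]
    exact isClosed_iInter fun p => isClosed_le (lB_cont _ _) continuous_const
  set A' : Set ((E × E) × ℝ) := A ∩ {zc | zc.2 ≤ c₀} with hA'def
  have hz₀A' : ((y₀, w₀), c₀) ∈ A' := ⟨hz₀A, le_refl c₀⟩
  obtain ⟨M, hM⟩ : ∃ m : ℝ, m = c₀ + ‖w₀ + y₀‖^2/2 := ⟨_, rfl⟩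
  obtain ⟨R, hR⟩ : ∃ rr : ℝ, rr = Real.sqrt (2*M + 1) := ⟨_, rfl⟩
  obtain ⟨lb, hlb⟩ : ∃ l : ℝ, l = -(‖w₀ + y₀‖^2/2) := ⟨_, rfl⟩
  have hsub : A' ⊆ (Metric.closedBall (-w₀) R ×ˢ Metric.closedBall (-y₀) R) ×ˢ Icc lb c₀ := by
    rintro zc ⟨hzA, hzc⟩
    have hzc' : zc.2 ≤ c₀ := hzc
    have h0 := hzA y₀ w₀ hw₀
    rw [lB_id] at h0
    have hb1 : ‖zc.1.1 + w₀‖^2/2 + ‖zc.1.2 + y₀‖^2/2 ≤ M := by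
      rw [hM]; linarith
    have hq1 : (0:ℝ) ≤ ‖zc.1.1 + w₀‖^2/2 := by positivity
    have hq2 : (0:ℝ) ≤ ‖zc.1.2 + y₀‖^2/2 := by positivity
    have h2M : 0 ≤ 2*M + 1 := by linarith
    constructor
    · constructor
      · rw [Metric.mem_closedBall, dist_eq_norm, sub_neg_eq_add]
        rw [hR]
        rw [Real.le_sqrt (norm_nonneg _) h2M]
        linarith
      · rw [Metric.mem_closedBall, dist_eq_norm, sub_neg_eq_add]
        rw [hR]
        rw [Real.le_sqrt (norm_nonneg _) h2M]
        linarith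
    · exact ⟨by rw [hlb]; linarith, hzc'⟩
  have hA'cpt : IsCompact A' := by
    refine IsCompact.of_isClosed_subset ?_ (hAclosed.inter (isClosed_le continuous_snd continuous_const)) hsub
    exact ((isCompact_closedBall _ _).prod (isCompact_closedBall _ _)).prod isCompact_Icc
  obtain ⟨zcb, hzcb, hmin⟩ := hA'cpt.exists_isMinOn ⟨_, hz₀A'⟩ continuous_snd.continuousOn
  rw [isMinOn_iff] at hmin
  set xb : E := zcb.1.1 with hxb
  set vb : E := zcb.1.2 with hvb
  have hz1 : zcb.1 = (xb, vb) := rfl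
  set fb : ℝ := zcb.2 - rB (xb, vb) with hfb
  have hss : ∀ y w, w ∈ S y → lB y w (xb, vb) ≤ fb := by
    intro y w hw
    have := hzcb.1 y w hw
    rw [hz1] at this
    simp only [hfb]; linarith
  have hstar : ∀ (z : E × E) (c : ℝ), c < zcb.2 → ∃ y w, w ∈ S y ∧ c < lB y w z + rB z := by
    intro z c hc
    by_contra hcon
    push_neg at hcon
    have hmemA : (z, c) ∈ A := fun y w hw => hcon y w hw
    have hmemA' : (z, c) ∈ A' := ⟨hmemA, le_trans hc.le hzcb.2⟩
    exact absurd (hmin _ hmemA') (by simpa using hc.not_ge)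
  have hSG : ∀ (z : E × E), ∀ ε : ℝ, 0 < ε → ∃ y w, w ∈ S y ∧
      fb - (⟪xb, z.1 - xb⟫_ℝ + ⟪vb, z.2 - vb⟫_ℝ) - ε < lB y w z := by
    intro z ε hε
    obtain ⟨d1, hd1⟩ : ∃ d, d = z.1 - xb := ⟨_, rfl⟩
    obtain ⟨d2, hd2⟩ : ∃ d, d = z.2 - vb := ⟨_, rfl⟩
    obtain ⟨rd, hrd⟩ : ∃ rdv : ℝ, rdv = ‖d1‖^2/2 + ‖d2‖^2/2 := ⟨_, rfl⟩
    have hrd0 : 0 ≤ rd := by rw [hrd]; positivity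
    obtain ⟨t, ht⟩ : ∃ tv : ℝ, tv = min 1 (ε/(2*(rd+1))) := ⟨_, rfl⟩
    have ht0 : 0 < t := by rw [ht]; exact lt_min one_pos (by positivity)
    have ht1 : t ≤ 1 := by rw [ht]; exact min_le_left _ _
    have htrd : t * rd ≤ ε/2 := by
      have h1 : t * rd ≤ (ε/(2*(rd+1))) * rd :=
        mul_le_mul_of_nonneg_right (by rw [ht]; exact min_le_right _ _) hrd0
      have h2 : (ε/(2*(rd+1))) * rd ≤ ε/2 := by
        rw [div_mul_eq_mul_div, div_le_div_iff₀ (by positivity) two_pos]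
        nlinarith
      linarith
    obtain ⟨y, w, hw, hlt⟩ := hstar (xb + t • d1, vb + t • d2) (zcb.2 - t*(ε/2))
      (by have := mul_pos ht0 (half_pos hε); linarith)
    refine ⟨y, w, hw, ?_⟩
    have hl_t : lB y w (xb + t • d1, vb + t • d2)
        = lB y w (xb, vb) + t * (⟪w, d1⟫_ℝ + ⟪d2, y⟫_ℝ) := by
      unfold lB
      simp only [inner_add_right, inner_add_left, real_inner_smul_right, real_inner_smul_left]
      ring
    have hl_z : lB y w z = lB y w (xb, vb) + (⟪w, d1⟫_ℝ + ⟪d2, y⟫_ℝ) := by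
      unfold lB
      rw [hd1, hd2]
      simp only [inner_sub_right, inner_sub_left]
      ring
    have hr_t : rB (xb + t • d1, vb + t • d2)
        = rB (xb, vb) + t * (⟪xb, d1⟫_ℝ + ⟪vb, d2⟫_ℝ) + t^2 * rd := by
      unfold rB
      simp only
      rw [norm_add_sq_real, norm_add_sq_real, real_inner_smul_right, real_inner_smul_right,
        norm_smul, norm_smul, hrd]
      simp only [Real.norm_eq_abs, mul_pow, sq_abs]
      ring
    have hss' := hss y w hw
    rw [hl_t, hr_t] at hlt
    have key : t * (fb - (⟪xb, z.1 - xb⟫_ℝ + ⟪vb, z.2 - vb⟫_ℝ) - ε) < t * (lB y w z) := by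
      have e_mul : (1 - t) * lB y w (xb, vb) ≤ (1 - t) * (zcb.2 - rB (xb, vb)) :=
        mul_le_mul_of_nonneg_left (by rw [hfb] at hss'; exact hss') (by linarith)
      have hip1 : ⟪xb, z.1 - xb⟫_ℝ = ⟪xb, d1⟫_ℝ := by rw [hd1]
      have hip2 : ⟪vb, z.2 - vb⟫_ℝ = ⟪vb, d2⟫_ℝ := by rw [hd2]
      rw [hip1, hip2, hl_z, hfb]
      nlinarith [mul_le_mul_of_nonneg_left htrd ht0.le, hlt, e_mul]
    exact lt_of_mul_lt_mul_left key ht0.le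
  have hnx2 : ⟪xb, xb⟫_ℝ = ‖xb‖^2 := real_inner_self_eq_norm_sq xb
  have hnv2 : ⟪vb, vb⟫_ℝ = ‖vb‖^2 := real_inner_self_eq_norm_sq vb
  have hdag : ∀ y w, w ∈ S y → fb + ‖xb‖^2 + ‖vb‖^2 ≤ ⟪xb, y⟫_ℝ + ⟪vb, w⟫_ℝ + ⟪w, y⟫_ℝ := by
    intro y w hw
    refine le_of_forall_pos_le_add ?_
    intro ε hε
    obtain ⟨y', w', hw', hlt⟩ := hSG (y, w) ε hε
    have hub := hmono_le y' w' hw' y w hw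
    have c1 : ⟪y, w⟫_ℝ = ⟪w, y⟫_ℝ := real_inner_comm _ _
    have hlt2 := lt_of_lt_of_le hlt hub
    simp only [inner_sub_right] at hlt2
    rw [hnx2, hnv2] at hlt2
    linarith
  have hfa : ⟪xb, vb⟫_ℝ ≤ fb := by
    by_cases hv : vb ∈ S xb
    · have h := hss xb vb hv
      have he : lB xb vb (xb, vb) = ⟪vb, xb⟫_ℝ := by unfold lB; simp only; ring
      rw [he] at h
      rw [real_inner_comm]
      exact h
    · have h' : ¬ ∀ y w, w ∈ S y → 0 ≤ ⟪vb - w, xb - y⟫_ℝ := fun h => hv (hmaxpt _ _ h)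
      push_neg at h'
      obtain ⟨y, w, hw, hneg⟩ := h'
      have h := hss y w hw
      rw [inner_sub_left, inner_sub_right, inner_sub_right] at hneg
      unfold lB at h
      simp only at h
      rw [real_inner_comm]
      linarith
  by_cases hz' : -xb ∈ S (-vb)
  · have hd := hdag (-vb) (-xb) hz'
    simp only [inner_neg_right, inner_neg_left, inner_neg_neg] at hd
    have c1 : ⟪vb, xb⟫_ℝ = ⟪xb, vb⟫_ℝ := real_inner_comm _ _
    have hn := norm_add_sq_real xb vb
    have hsum : ‖xb + vb‖^2 ≤ 0 := by linarith
    have h0 : xb + vb = 0 := by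
      have h1 : ‖xb + vb‖^2 = 0 := le_antisymm hsum (by positivity)
      have h2 := pow_eq_zero_iff (n := 2) (by norm_num) |>.mp h1
      exact norm_eq_zero.mp h2
    have hxe : xb = -vb := add_eq_zero_iff_eq_neg.mp h0
    refine ⟨xb, ?_⟩
    rw [← hxe] at hz'
    exact hz'
  · exfalso
    have h' : ¬ ∀ y w, w ∈ S y → 0 ≤ ⟪-xb - w, -vb - y⟫_ℝ := fun h => hz' (hmaxpt _ _ h)
    push_neg at h'
    obtain ⟨y, w, hw, hneg⟩ := h'
    have hd := hdag y w hw
    have hexp : ⟪-xb - w, -vb - y⟫_ℝ = ⟪xb + w, vb + y⟫_ℝ := by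
      have e1 : -xb - w = -(xb + w) := by abel
      have e2 : -vb - y = -(vb + y) := by abel
      rw [e1, e2, inner_neg_neg]
    rw [hexp] at hneg
    simp only [inner_add_left, inner_add_right] at hneg
    have c1 : ⟪w, vb⟫_ℝ = ⟪vb, w⟫_ℝ := real_inner_comm _ _
    have hn := norm_add_sq_real xb vb
    have hnn : (0:ℝ) ≤ ‖xb + vb‖^2 := by positivity
    linarith

end Minty

private lemma recession_dir {E : Type*} [NormedAddCommGroup E] [InnerProductSpace ℝ E]
    [FiniteDimensional ℝ E] {Ω : Set E} (hcl : IsClosed Ω) (hconv : Convex ℝ Ω)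
    (x : ℕ → E) (hx : ∀ k, x k ∈ Ω)
    (hnorm : Tendsto (fun k => ‖x k‖) atTop atTop) :
    ∃ w : E, w ≠ 0 ∧ (∀ z ∈ Ω, ∀ τ : ℝ, 0 ≤ τ → z + τ • w ∈ Ω) ∧
      ∃ φ : ℕ → ℕ, Tendsto (fun j => ‖x (φ j)‖) atTop atTop ∧
        Tendsto (fun j => (‖x (φ j)‖)⁻¹ • x (φ j)) atTop (𝓝 w) := by
  obtain ⟨N, hN⟩ := eventually_atTop.mp (hnorm.eventually_ge_atTop 1)
  have hpos : ∀ k, (0:ℝ) < ‖x (k + N)‖ := fun k => lt_of_lt_of_le one_pos (hN _ (Nat.le_add_left _ _))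
  have hu : ∀ k, (‖x (k + N)‖)⁻¹ • x (k + N) ∈ Metric.sphere (0:E) 1 := by
    intro k
    rw [mem_sphere_zero_iff_norm, norm_smul, Real.norm_eq_abs, abs_of_pos (inv_pos.mpr (hpos k))]
    exact inv_mul_cancel₀ (hpos k).ne'
  obtain ⟨w, hwsph, φ0, hφ0, hconv0⟩ :=
    (isCompact_sphere (0:E) 1).tendsto_subseq hu
  have hwn : ‖w‖ = 1 := mem_sphere_zero_iff_norm.mp hwsph
  have hw0 : w ≠ 0 := by intro h; rw [h, norm_zero] at hwn; norm_num at hwn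
  have hφmono : StrictMono (fun j => φ0 j + N) := fun a b h => Nat.add_lt_add_right (hφ0 h) N
  have hφnorm : Tendsto (fun j => ‖x (φ0 j + N)‖) atTop atTop :=
    hnorm.comp hφmono.tendsto_atTop
  have hconv1 : Tendsto (fun j => (‖x (φ0 j + N)‖)⁻¹ • x (φ0 j + N)) atTop (𝓝 w) := hconv0
  refine ⟨w, hw0, ?_, fun j => φ0 j + N, hφnorm, hconv1⟩
  intro z hz τ hτ
  have hθ : Tendsto (fun j => τ * (‖x (φ0 j + N)‖)⁻¹) atTop (𝓝 0) := by
    simpa using (hφnorm.inv_tendsto_atTop.const_mul τ)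
  have hptend : Tendsto
      (fun j => z + τ • ((‖x (φ0 j + N)‖)⁻¹ • x (φ0 j + N))
        - (τ * (‖x (φ0 j + N)‖)⁻¹) • z) atTop (𝓝 (z + τ • w)) := by
    have h1 : Tendsto (fun j => z + τ • ((‖x (φ0 j + N)‖)⁻¹ • x (φ0 j + N))) atTop
        (𝓝 (z + τ • w)) := tendsto_const_nhds.add (hconv1.const_smul τ)
    have h2 : Tendsto (fun j => (τ * (‖x (φ0 j + N)‖)⁻¹) • z) atTop (𝓝 (0:E)) := by
      simpa using hθ.smul (tendsto_const_nhds (x := z))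
    simpa using h1.sub h2
  have hmem : ∀ᶠ j in atTop, z + τ • ((‖x (φ0 j + N)‖)⁻¹ • x (φ0 j + N))
      - (τ * (‖x (φ0 j + N)‖)⁻¹) • z ∈ Ω := by
    filter_upwards [hφnorm.eventually_ge_atTop τ] with j hj
    have hn0 : (0:ℝ) < ‖x (φ0 j + N)‖ := hpos _
    have hθ0 : 0 ≤ τ * (‖x (φ0 j + N)‖)⁻¹ := by positivity
    have hθ1 : τ * (‖x (φ0 j + N)‖)⁻¹ ≤ 1 := by
      rw [← div_eq_mul_inv, div_le_one hn0]; exact hj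
    have hcc := hconv hz (hx (φ0 j + N)) (by linarith : (0:ℝ) ≤ 1 - τ * (‖x (φ0 j + N)‖)⁻¹)
      hθ0 (by ring)
    have heq : (1 - τ * (‖x (φ0 j + N)‖)⁻¹) • z + (τ * (‖x (φ0 j + N)‖)⁻¹) • x (φ0 j + N)
        = z + τ • ((‖x (φ0 j + N)‖)⁻¹ • x (φ0 j + N)) - (τ * (‖x (φ0 j + N)‖)⁻¹) • z := by
      rw [sub_smul, one_smul, smul_smul]
      abel
    rwa [heq] at hcc
  exact hcl.mem_of_tendsto hptend hmem

/-- For a maximal monotone map T with dom T = Ω, the strong solution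
set of GVI(T,Ω) is nonempty and bounded iff for every nonzero direction w in the
recession cone of Ω there are x ∈ Ω and v ∈ T(x) with ⟨v, w⟩ > 0. -/
theorem gvi_sol_nonempty_bounded_iff {n : ℕ}
    (Ω : Set (EuclideanSpace ℝ (Fin n)))
    (hne : Ω.Nonempty) (hcl : IsClosed Ω) (hconv : Convex ℝ Ω)
    (T : EuclideanSpace ℝ (Fin n) → Set (EuclideanSpace ℝ (Fin n)))
    (hmono : ∀ x y v w, v ∈ T x → w ∈ T y → 0 ≤ ⟪v - w, x - y⟫_ℝ)
    (hmax : ∀ T' : EuclideanSpace ℝ (Fin n) → Set (EuclideanSpace ℝ (Fin n)),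
      (∀ x y v w, v ∈ T' x → w ∈ T' y → 0 ≤ ⟪v - w, x - y⟫_ℝ) →
      (∀ x, T x ⊆ T' x) → ∀ x, T' x = T x)
    (hdom : {x | (T x).Nonempty} = Ω) :
    (({x : (EuclideanSpace ℝ (Fin n)) |
        x ∈ Ω ∧ ∃ v ∈ T x, ∀ z ∈ Ω, 0 ≤ ⟪v, z - x⟫_ℝ}).Nonempty ∧
      Bornology.IsBounded {x : (EuclideanSpace ℝ (Fin n)) |
        x ∈ Ω ∧ ∃ v ∈ T x, ∀ z ∈ Ω, 0 ≤ ⟪v, z - x⟫_ℝ}) ↔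
    (∀ w : EuclideanSpace ℝ (Fin n),
      (∀ x ∈ Ω, ∀ τ : ℝ, 0 ≤ τ → x + τ • w ∈ Ω) → w ≠ 0 →
      ∃ x ∈ Ω, ∃ v ∈ T x, 0 < ⟪v, w⟫_ℝ) := by
  classical
  -- point maximality criterion
  have hmaxpt : ∀ x v, (∀ y w, w ∈ T y → 0 ≤ ⟪v - w, x - y⟫_ℝ) → v ∈ T x := by
    intro x v hv
    have hmono' : ∀ a b p q, p ∈ T a ∪ {u | a = x ∧ u = v} →
        q ∈ T b ∪ {u | b = x ∧ u = v} → 0 ≤ ⟪p - q, a - b⟫_ℝ := by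
      rintro a b p q hp hq
      rcases hp with hp | ⟨ha, hpv⟩ <;> rcases hq with hq | ⟨hb, hqv⟩
      · exact hmono a b p q hp hq
      · rw [hb, hqv]
        have h := hv a p hp
        rwa [← neg_sub p v, ← neg_sub a x, inner_neg_neg] at h
      · rw [ha, hpv]
        exact hv b q hq
      · rw [ha, hpv, hb, hqv]
        simp
    have heq := hmax (fun y => T y ∪ {u | y = x ∧ u = v}) hmono'
      (fun y u hu => Or.inl hu) x
    have hvmem : v ∈ T x ∪ {u | x = x ∧ u = v} := Or.inr ⟨rfl, rfl⟩
    rw [heq] at hvmem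
    exact hvmem
  have hdom' : ∀ z : EuclideanSpace ℝ (Fin n), (T z).Nonempty ↔ z ∈ Ω := by
    intro z
    constructor
    · intro hz; rw [← hdom]; exact hz
    · intro hz; rw [← hdom] at hz; exact hz
  -- solution set = zeros of T
  have hSol : ∀ x : EuclideanSpace ℝ (Fin n),
      (x ∈ Ω ∧ ∃ v ∈ T x, ∀ z ∈ Ω, 0 ≤ ⟪v, z - x⟫_ℝ) ↔ (0:EuclideanSpace ℝ (Fin n)) ∈ T x := by
    intro x
    constructor
    · rintro ⟨hxΩ, v, hv, hvi⟩
      apply hmaxpt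
      intro y w hw
      have hyΩ : y ∈ Ω := (hdom' y).mp ⟨w, hw⟩
      have h1 := hmono y x w v hw hv
      have h2 := hvi y hyΩ
      have hexp : ⟪(0:EuclideanSpace ℝ (Fin n)) - w, x - y⟫_ℝ
          = ⟪w - v, y - x⟫_ℝ + ⟪v, y - x⟫_ℝ := by
        rw [zero_sub, inner_neg_left, show x - y = -(y - x) from by abel, inner_neg_right,
          neg_neg, inner_sub_left]
        ring
      rw [hexp]
      linarith
    · intro h0
      exact ⟨(hdom' x).mp ⟨0, h0⟩, 0, h0, fun z hz => by simp⟩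
  constructor
  · rintro ⟨⟨xbar, hxbar⟩, hbd⟩ w hrec hw0
    by_contra hcon
    push_neg at hcon
    have hxΩ : xbar ∈ Ω := hxbar.1
    have h0 : (0:EuclideanSpace ℝ (Fin n)) ∈ T xbar := (hSol xbar).mp hxbar
    obtain ⟨Rb, hRb⟩ := isBounded_iff_forall_norm_le.mp hbd
    have hwpos : 0 < ‖w‖ := norm_pos_iff.mpr hw0
    have hRb0 : ‖xbar‖ ≤ Rb := hRb _ hxbar
    obtain ⟨τ, hτ⟩ : ∃ t : ℝ, t = (Rb + ‖xbar‖ + 1)/‖w‖ := ⟨_, rfl⟩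
    have hτ0 : 0 ≤ τ := by
      rw [hτ]
      apply div_nonneg _ hwpos.le
      linarith [norm_nonneg xbar]
    have hnew : (0:EuclideanSpace ℝ (Fin n)) ∈ T (xbar + τ • w) := by
      apply hmaxpt
      intro y u hu
      have hyΩ : y ∈ Ω := (hdom' y).mp ⟨u, hu⟩
      have h1 := hmono y xbar u 0 hu h0
      have h2 : ⟪u, w⟫_ℝ ≤ 0 := hcon y hyΩ u hu
      rw [sub_zero] at h1
      have hexp : ⟪(0:EuclideanSpace ℝ (Fin n)) - u, xbar + τ • w - y⟫_ℝ
          = ⟪u, y - xbar⟫_ℝ + τ * (-⟪u, w⟫_ℝ) := by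
        rw [zero_sub, inner_neg_left, inner_sub_right, inner_add_right, real_inner_smul_right,
          inner_sub_right]
        ring
      rw [hexp]
      have h3 : 0 ≤ τ * (-⟪u, w⟫_ℝ) := mul_nonneg hτ0 (by linarith)
      linarith
    have hmem : xbar + τ • w ∈ {x : EuclideanSpace ℝ (Fin n) |
        x ∈ Ω ∧ ∃ v ∈ T x, ∀ z ∈ Ω, 0 ≤ ⟪v, z - x⟫_ℝ} := (hSol _).mpr hnew
    have hle := hRb _ hmem
    have hge : ‖τ • w‖ ≤ ‖xbar + τ • w‖ + ‖xbar‖ := by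
      calc ‖τ • w‖ = ‖(xbar + τ • w) - xbar‖ := by congr 1; abel
      _ ≤ _ := norm_sub_le _ _
    rw [norm_smul, Real.norm_eq_abs, abs_of_nonneg hτ0] at hge
    have hτw : τ * ‖w‖ = Rb + ‖xbar‖ + 1 := by
      rw [hτ, div_mul_cancel₀ _ (ne_of_gt hwpos)]
    linarith
  · intro hcond
    -- approximate solutions via Minty
    have happrox : ∀ k : ℕ, ∃ xk : EuclideanSpace ℝ (Fin n),
        -(((k:ℝ)+1)⁻¹ • xk) ∈ T xk := by
      intro k
      have hk0 : (0:ℝ) < (k:ℝ)+1 := by positivity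
      obtain ⟨y₀, hy₀Ω⟩ := hne
      obtain ⟨u₀, hu₀⟩ := (hdom' y₀).mpr hy₀Ω
      obtain ⟨x, hx⟩ := minty_aux (fun y => (((k:ℝ)+1) • ·) '' T y)
        (by
          rintro a b p q ⟨u, hu, rfl⟩ ⟨u', hu', rfl⟩
          rw [← smul_sub, real_inner_smul_left]
          exact mul_nonneg hk0.le (hmono a b u u' hu hu'))
        (by
          intro a p hp
          refine ⟨((k:ℝ)+1)⁻¹ • p, ?_, ?_⟩
          · apply hmaxpt
            intro y u hu
            have h := hp y (((k:ℝ)+1) • u) ⟨u, hu, rfl⟩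
            have he : ((k:ℝ)+1)⁻¹ • (p - ((k:ℝ)+1) • u) = ((k:ℝ)+1)⁻¹ • p - u := by
              rw [smul_sub, smul_smul, inv_mul_cancel₀ hk0.ne', one_smul]
            rw [← he, real_inner_smul_left]
            exact mul_nonneg (by positivity) h
          · show ((k:ℝ)+1) • (((k:ℝ)+1)⁻¹ • p) = p
            rw [smul_smul, mul_inv_cancel₀ hk0.ne', one_smul])
        ⟨y₀, ((k:ℝ)+1) • u₀, ⟨u₀, hu₀, rfl⟩⟩
      obtain ⟨u, hu, hcu⟩ := hx
      refine ⟨x, ?_⟩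
      have he : u = -(((k:ℝ)+1)⁻¹ • x) := by
        have h2 := congrArg (fun z : EuclideanSpace ℝ (Fin n) => ((k:ℝ)+1)⁻¹ • z) hcu
        simpa [smul_smul, inv_mul_cancel₀ hk0.ne', one_smul, smul_neg] using h2
      rwa [← he]
    choose xs hxs using happrox
    have hxsΩ : ∀ k, xs k ∈ Ω := fun k => (hdom' _).mp ⟨_, hxs k⟩
    -- boundedness of the solution set
    have hbddSol : Bornology.IsBounded {x : EuclideanSpace ℝ (Fin n) |
        x ∈ Ω ∧ ∃ v ∈ T x, ∀ z ∈ Ω, 0 ≤ ⟪v, z - x⟫_ℝ} := by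
      by_contra hnb
      rw [isBounded_iff_forall_norm_le] at hnb
      push_neg at hnb
      have hex : ∀ m : ℕ, ∃ g, g ∈ {x : EuclideanSpace ℝ (Fin n) |
          x ∈ Ω ∧ ∃ v ∈ T x, ∀ z ∈ Ω, 0 ≤ ⟪v, z - x⟫_ℝ} ∧ (m:ℝ) < ‖g‖ := fun m => by
        obtain ⟨g, hg1, hg2⟩ := hnb m
        exact ⟨g, hg1, hg2⟩
      choose g hg1 hg2 using hex
      have hnorm : Tendsto (fun m => ‖g m‖) atTop atTop :=
        tendsto_atTop_mono (fun m => (hg2 m).le) tendsto_natCast_atTop_atTop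
      obtain ⟨w, hw0, hrecp, φ, hφnorm, hconvt⟩ :=
        recession_dir hcl hconv g (fun m => (hg1 m).1) hnorm
      obtain ⟨y, hyΩ, u, hu, hupos⟩ := hcond w hrecp hw0
      have h0m : ∀ m, (0:EuclideanSpace ℝ (Fin n)) ∈ T (g m) := fun m => (hSol _).mp (hg1 m)
      have hineq : ∀ m, ⟪u, g m⟫_ℝ ≤ ⟪u, y⟫_ℝ := by
        intro m
        have h := hmono (g m) y 0 u (h0m m) hu
        have hexp : ⟪(0:EuclideanSpace ℝ (Fin n)) - u, g m - y⟫_ℝ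
            = -(⟪u, g m⟫_ℝ - ⟪u, y⟫_ℝ) := by
          rw [zero_sub, inner_neg_left, inner_sub_right]
        rw [hexp] at h
        linarith
      have hdiv : ∀ j, ⟪u, (‖g (φ j)‖)⁻¹ • g (φ j)⟫_ℝ ≤ (‖g (φ j)‖)⁻¹ * ⟪u, y⟫_ℝ := by
        intro j
        rw [real_inner_smul_right]
        exact mul_le_mul_of_nonneg_left (hineq _) (by positivity)
      have hL : Tendsto (fun j => ⟪u, (‖g (φ j)‖)⁻¹ • g (φ j)⟫_ℝ) atTop (𝓝 ⟪u, w⟫_ℝ) :=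
        Tendsto.inner tendsto_const_nhds hconvt
      have hRt : Tendsto (fun j => (‖g (φ j)‖)⁻¹ * ⟪u, y⟫_ℝ) atTop (𝓝 0) := by
        simpa using hφnorm.inv_tendsto_atTop.mul_const (⟪u, y⟫_ℝ)
      have := le_of_tendsto_of_tendsto' hL hRt hdiv
      linarith
    refine ⟨?_, hbddSol⟩
    -- nonemptiness
    have hxsbdd : ∃ R, ∀ k, ‖xs k‖ ≤ R := by
      by_contra hnb
      push_neg at hnb
      have hex : ∀ m : ℕ, ∃ k, (m:ℝ) < ‖xs k‖ := fun m => by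
        obtain ⟨k, hk⟩ := hnb m
        exact ⟨k, hk⟩
      choose ψ hψ using hex
      have hnorm : Tendsto (fun m => ‖xs (ψ m)‖) atTop atTop :=
        tendsto_atTop_mono (fun m => (hψ m).le) tendsto_natCast_atTop_atTop
      obtain ⟨w, hw0, hrecp, φ, hφnorm, hconvt⟩ :=
        recession_dir hcl hconv (fun m => xs (ψ m)) (fun m => hxsΩ _) hnorm
      obtain ⟨y, hyΩ, u, hu, hupos⟩ := hcond w hrecp hw0
      have hineq : ∀ j, ‖y‖ ≤ ‖xs (ψ (φ j))‖ →
          ⟪u, xs (ψ (φ j))⟫_ℝ ≤ ⟪u, y⟫_ℝ := by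
        intro j hj
        set k := ψ (φ j)
        have h := hmono (xs k) y (-(((k:ℝ)+1)⁻¹ • xs k)) u (hxs k) hu
        have hexp : ⟪-(((k:ℝ)+1)⁻¹ • xs k) - u, xs k - y⟫_ℝ
            = -(((k:ℝ)+1)⁻¹) * (⟪xs k, xs k⟫_ℝ - ⟪xs k, y⟫_ℝ)
              - (⟪u, xs k⟫_ℝ - ⟪u, y⟫_ℝ) := by
          rw [inner_sub_left, inner_neg_left, real_inner_smul_left, inner_sub_right,
            inner_sub_right]
          ring
        rw [hexp] at h
        have hcross : ⟪xs k, y⟫_ℝ ≤ ⟪xs k, xs k⟫_ℝ := by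
          have h1 := real_inner_le_norm (xs k) y
          have h2 : ‖xs k‖ * ‖y‖ ≤ ‖xs k‖ * ‖xs k‖ :=
            mul_le_mul_of_nonneg_left hj (norm_nonneg _)
          rw [real_inner_self_eq_norm_mul_norm]
          linarith
        have hkpos : (0:ℝ) ≤ ((k:ℝ)+1)⁻¹ := by positivity
        nlinarith
      have hdiv : ∀ᶠ j in atTop, ⟪u, (‖xs (ψ (φ j))‖)⁻¹ • xs (ψ (φ j))⟫_ℝ
          ≤ (‖xs (ψ (φ j))‖)⁻¹ * ⟪u, y⟫_ℝ := by
        filter_upwards [hφnorm.eventually_ge_atTop ‖y‖] with j hj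
        rw [real_inner_smul_right]
        exact mul_le_mul_of_nonneg_left (hineq j hj) (by positivity)
      have hL : Tendsto (fun j => ⟪u, (‖xs (ψ (φ j))‖)⁻¹ • xs (ψ (φ j))⟫_ℝ) atTop
          (𝓝 ⟪u, w⟫_ℝ) := Tendsto.inner tendsto_const_nhds hconvt
      have hRt : Tendsto (fun j => (‖xs (ψ (φ j))‖)⁻¹ * ⟪u, y⟫_ℝ) atTop (𝓝 0) := by
        simpa using hφnorm.inv_tendsto_atTop.mul_const (⟪u, y⟫_ℝ)
      have := le_of_tendsto_of_tendsto hL hRt hdiv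
      linarith
    obtain ⟨R, hR⟩ := hxsbdd
    have hmemball : ∀ k, xs k ∈ Metric.closedBall (0:EuclideanSpace ℝ (Fin n)) R :=
      fun k => mem_closedBall_zero_iff.mpr (hR k)
    obtain ⟨xbar, _, φ, hφ, hxconv⟩ :=
      (isCompact_closedBall (0:EuclideanSpace ℝ (Fin n)) R).tendsto_subseq hmemball
    have hcoef : Tendsto (fun j => (((φ j:ℕ):ℝ)+1)⁻¹) atTop (𝓝 0) := by
      apply Tendsto.inv_tendsto_atTop
      exact tendsto_atTop_add_const_right _ 1 (tendsto_natCast_atTop_atTop.comp hφ.tendsto_atTop)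
    have hvconv : Tendsto (fun j => -((((φ j:ℕ):ℝ)+1)⁻¹ • xs (φ j))) atTop
        (𝓝 (0:EuclideanSpace ℝ (Fin n))) := by
      have h1 : Tendsto (fun j => (((φ j:ℕ):ℝ)+1)⁻¹ • xs (φ j)) atTop
          (𝓝 (0:EuclideanSpace ℝ (Fin n))) := by
        have := hcoef.smul hxconv
        simpa using this
      simpa using h1.neg
    have h0mem : (0:EuclideanSpace ℝ (Fin n)) ∈ T xbar := by
      apply hmaxpt
      intro y u hu
      have hj : ∀ j, 0 ≤ ⟪-((((φ j:ℕ):ℝ)+1)⁻¹ • xs (φ j)) - u, xs (φ j) - y⟫_ℝ :=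
        fun j => hmono _ y _ u (hxs (φ j)) hu
      have hlim : Tendsto (fun j => ⟪-((((φ j:ℕ):ℝ)+1)⁻¹ • xs (φ j)) - u,
          xs (φ j) - y⟫_ℝ) atTop (𝓝 ⟪(0:EuclideanSpace ℝ (Fin n)) - u, xbar - y⟫_ℝ) :=
        Tendsto.inner (hvconv.sub tendsto_const_nhds) (hxconv.sub tendsto_const_nhds)
      exact le_of_tendsto_of_tendsto' tendsto_const_nhds hlim hj
    exact ⟨xbar, (hSol xbar).mpr h0mem⟩
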